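/- arXiv:1702.05829 — 4 statements merged into one kernel-verified Lean document; each statement's English description precedes it below -/
import Mathlib

section
/- If C1 and C2 are bivariate copulas and 0 < θ < 1, then the gluing function C(u,v) defined by C(u,v) = θ·C1(u/θ, v) for 0 ≤ u ≤ θ, and C(u,v) = (1−θ)·C2((u−θ)/(1−θ), v) + θ·v for θ ≤ u ≤ 1, is itself a bivariate copula. -/
def IsCopula (C : ℝ → ℝ → ℝ) : Prop :=
  (∀ u ∈ Set.Icc (0:ℝ) 1, C u 0 = 0) ∧
  (∀ v ∈ Set.Icc (0:ℝ) 1, C 0 v = 0) ∧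
  (∀ u ∈ Set.Icc (0:ℝ) 1, C u 1 = u) ∧
  (∀ v ∈ Set.Icc (0:ℝ) 1, C 1 v = v) ∧
  (∀ u₁ u₂ v₁ v₂ : ℝ, 0 ≤ u₁ → u₁ ≤ u₂ → u₂ ≤ 1 → 0 ≤ v₁ → v₁ ≤ v₂ → v₂ ≤ 1 →
    0 ≤ C u₂ v₂ - C u₂ v₁ - C u₁ v₂ + C u₁ v₁)

noncomputable def glueCopula (C₁ C₂ : ℝ → ℝ → ℝ) (θ : ℝ) (u v : ℝ) : ℝ :=
  if u ≤ θ then θ * C₁ (u / θ) v else (1 - θ) * C₂ ((u - θ) / (1 - θ)) v + θ * v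

theorem gluing_is_copula (C₁ C₂ : ℝ → ℝ → ℝ) (θ : ℝ)
    (h₁ : IsCopula C₁) (h₂ : IsCopula C₂) (hθ0 : 0 < θ) (hθ1 : θ < 1) :
    IsCopula (glueCopula C₁ C₂ θ) := by
  obtain ⟨h1u0, h10v, h1u1, h11v, h1inc⟩ := h₁
  obtain ⟨h2u0, h20v, h2u1, h21v, h2inc⟩ := h₂
  have hθ0' : (0:ℝ) < 1 - θ := by linarith
  refine ⟨?_, ?_, ?_, ?_, ?_⟩
  · intro u hu
    unfold glueCopula
    split_ifs with h
    · rw [h1u0 (u/θ) ⟨div_nonneg hu.1 hθ0.le, by rw [div_le_one hθ0]; exact h⟩]; ring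
    · rw [h2u0 ((u-θ)/(1-θ)) ⟨div_nonneg (by linarith [hu.1]) hθ0'.le, by rw [div_le_one hθ0']; linarith [hu.2]⟩]; ring
  · intro v hv
    unfold glueCopula
    rw [if_pos hθ0.le, zero_div, h10v v hv]; ring
  · intro u hu
    unfold glueCopula
    split_ifs with h
    · rw [h1u1 (u/θ) ⟨div_nonneg hu.1 hθ0.le, by rw [div_le_one hθ0]; exact h⟩]
      field_simp
    · rw [h2u1 ((u-θ)/(1-θ)) ⟨div_nonneg (by linarith) hθ0'.le, by rw [div_le_one hθ0']; linarith [hu.2]⟩]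
      field_simp
      ring
  · intro v hv
    unfold glueCopula
    rw [if_neg (by linarith), div_self hθ0'.ne', h21v v hv]; ring
  · intro u₁ u₂ v₁ v₂ hu1 hu12 hu2 hv1 hv12 hv2
    have hv1m : v₁ ∈ Set.Icc (0:ℝ) 1 := ⟨hv1, by linarith⟩
    have hv2m : v₂ ∈ Set.Icc (0:ℝ) 1 := ⟨by linarith, hv2⟩
    unfold glueCopula
    rcases le_or_gt u₂ θ with h2 | h2
    · have h1 : u₁ ≤ θ := le_trans hu12 h2
      simp only [if_pos h1, if_pos h2]
      have := h1inc (u₁/θ) (u₂/θ) v₁ v₂ (div_nonneg hu1 hθ0.le)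
        (div_le_div_of_nonneg_right hu12 hθ0.le)
        (by rw [div_le_one hθ0]; exact h2) hv1 hv12 hv2
      nlinarith
    · rcases le_or_gt u₁ θ with h1 | h1
      · simp only [if_pos h1, if_neg (not_le.mpr h2)]
        have hb2 : (u₂-θ)/(1-θ) ∈ Set.Icc (0:ℝ) 1 :=
          ⟨div_nonneg (by linarith) hθ0'.le, by rw [div_le_one hθ0']; linarith⟩
        have ha1 : u₁/θ ∈ Set.Icc (0:ℝ) 1 :=
          ⟨div_nonneg hu1 hθ0.le, by rw [div_le_one hθ0]; exact h1⟩
        have hA := h2inc 0 ((u₂-θ)/(1-θ)) v₁ v₂ le_rfl hb2.1 hb2.2 hv1 hv12 hv2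
        rw [h20v v₁ hv1m, h20v v₂ hv2m] at hA
        have hB := h1inc (u₁/θ) 1 v₁ v₂ ha1.1 ha1.2 le_rfl hv1 hv12 hv2
        rw [h11v v₁ hv1m, h11v v₂ hv2m] at hB
        nlinarith
      · simp only [if_neg (not_le.mpr h1), if_neg (not_le.mpr h2)]
        have := h2inc ((u₁-θ)/(1-θ)) ((u₂-θ)/(1-θ)) v₁ v₂
          (div_nonneg (by linarith) hθ0'.le)
          (div_le_div_of_nonneg_right (by linarith) hθ0'.le)
          (by rw [div_le_one hθ0']; linarith) hv1 hv12 hv2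
        nlinarith
end

section
/- Let C1 and C2 be copulas with C1(u,v) ≥ uv and C2(u,v) ≤ uv for all (u,v) ∈ [0,1]², and let 0 < θ < 1. Then the diagonal section δ of the glued copula C_{1,2,θ} satisfies: δ(t) ≥ t² for 0 ≤ t ≤ θ, δ(θ) = θ², and δ(t) ≤ t² for θ ≤ t ≤ 1. -/
theorem glued_diagonal_sign (C₁ C₂ : ℝ → ℝ → ℝ) (θ : ℝ)
    (h₁ : IsCopula C₁) (h₂ : IsCopula C₂) (hθ0 : 0 < θ) (hθ1 : θ < 1)
    (hPQD : ∀ u ∈ Set.Icc (0:ℝ) 1, ∀ v ∈ Set.Icc (0:ℝ) 1, u * v ≤ C₁ u v)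
    (hNQD : ∀ u ∈ Set.Icc (0:ℝ) 1, ∀ v ∈ Set.Icc (0:ℝ) 1, C₂ u v ≤ u * v) :
    (∀ t, 0 ≤ t → t ≤ θ → t ^ 2 ≤ glueCopula C₁ C₂ θ t t) ∧
    glueCopula C₁ C₂ θ θ θ = θ ^ 2 ∧
    (∀ t, θ ≤ t → t ≤ 1 → glueCopula C₁ C₂ θ t t ≤ t ^ 2) := by
  obtain ⟨_, _, _, h1top, _⟩ := h₁
  have key1 : ∀ t, 0 ≤ t → t ≤ θ → t ^ 2 ≤ glueCopula C₁ C₂ θ t t := by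
    intro t ht0 htθ
    have ht1 : t ≤ 1 := htθ.trans hθ1.le
    have hdiv : t / θ ∈ Set.Icc (0:ℝ) 1 :=
      ⟨div_nonneg ht0 hθ0.le, (div_le_one hθ0).2 htθ⟩
    have := hPQD _ hdiv t ⟨ht0, ht1⟩
    have h2 : θ * (t / θ * t) ≤ θ * C₁ (t / θ) t :=
      mul_le_mul_of_nonneg_left this hθ0.le
    have he : θ * (t / θ * t) = t ^ 2 := by
      field_simp
    rw [glueCopula, if_pos htθ]
    linarith
  refine ⟨key1, ?_, ?_⟩
  · rw [glueCopula, if_pos le_rfl, div_self hθ0.ne',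
      h1top θ ⟨hθ0.le, hθ1.le⟩]
    ring
  · intro t htθ ht1
    rcases eq_or_lt_of_le htθ with h | h
    · subst h
      rw [glueCopula, if_pos le_rfl, div_self hθ0.ne',
        h1top θ ⟨hθ0.le, hθ1.le⟩]
      exact le_of_eq (by ring)
    · have ht0 : 0 ≤ t := hθ0.le.trans htθ
      have h1θ : (0:ℝ) < 1 - θ := by linarith
      have hdiv : (t - θ) / (1 - θ) ∈ Set.Icc (0:ℝ) 1 :=
        ⟨div_nonneg (by linarith) h1θ.le, (div_le_one h1θ).2 (by linarith)⟩
      have := hNQD _ hdiv t ⟨ht0, ht1⟩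
      have h2 : (1 - θ) * C₂ ((t - θ) / (1 - θ)) t ≤ (1 - θ) * ((t - θ) / (1 - θ) * t) :=
        mul_le_mul_of_nonneg_left this h1θ.le
      have he : (1 - θ) * ((t - θ) / (1 - θ) * t) = (t - θ) * t := by
        field_simp
      rw [glueCopula, if_neg (not_le.2 h)]
      nlinarith
end

section
/- For 0 < θ < 1, Spearman's rho of the copula C_θ equals 2θ − 1, where ρ = 12·∫∫_{[0,1]²} C_θ(u,v) du dv − 3 and C_θ(u,v) = u if u ≤ θv, θv if θv < u < 1−(1−θ)v, and u+v−1 if u ≥ 1−(1−θ)v. -/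
open MeasureTheory intervalIntegral Set

noncomputable def Ctheta (θ u v : ℝ) : ℝ :=
  if u ≤ θ * v then u else if u < 1 - (1 - θ) * v then θ * v else u + v - 1

lemma Ctheta_eq_F (θ u : ℝ) {v : ℝ} (hv1 : v ≤ 1) :
    Ctheta θ u v = max (min u (θ * v)) (u + v - 1) := by
  unfold Ctheta
  split_ifs with h1 h2
  · rw [min_eq_left h1, max_eq_left (by linarith)]
  · push_neg at h1
    rw [min_eq_right h1.le, max_eq_left (by linarith)]
  · push_neg at h1 h2
    rw [min_eq_right h1.le, max_eq_right (by linarith)]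

lemma contF (θ u : ℝ) : Continuous (fun v : ℝ => max (min u (θ * v)) (u + v - 1)) := by
  fun_prop

lemma inner_le (θ u : ℝ) (hθ0 : 0 < θ) (hθ1 : θ < 1) (hu0 : 0 ≤ u) (huθ : u ≤ θ) :
    ∫ v in (0:ℝ)..1, Ctheta θ u v = u - u ^ 2 / (2 * θ) := by
  set a := u / θ with ha
  have ha0 : 0 ≤ a := div_nonneg hu0 hθ0.le
  have ha1 : a ≤ 1 := (div_le_one hθ0).2 huθ
  have hua : u = θ * a := by rw [ha]; field_simp
  rw [integral_congr (g := fun v => max (min u (θ * v)) (u + v - 1))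
    (fun v hv => Ctheta_eq_F θ u
      (by rw [Set.uIcc_of_le (by norm_num : (0:ℝ) ≤ 1)] at hv; exact hv.2))]
  rw [← integral_add_adjacent_intervals (b := a)
    ((contF θ u).intervalIntegrable _ _) ((contF θ u).intervalIntegrable _ _)]
  have h1 : ∫ v in (0:ℝ)..a, max (min u (θ * v)) (u + v - 1) = ∫ v in (0:ℝ)..a, θ * v := by
    apply integral_congr
    intro v hv
    rw [Set.uIcc_of_le ha0] at hv
    obtain ⟨hv0, hva⟩ := hv
    have hθv : θ * v ≤ u := by nlinarith
    dsimp only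
    rw [min_eq_right hθv, max_eq_left (by nlinarith)]
  have h2 : ∫ v in a..1, max (min u (θ * v)) (u + v - 1) = ∫ v in a..1, (u : ℝ) := by
    apply integral_congr
    intro v hv
    rw [Set.uIcc_of_le ha1] at hv
    obtain ⟨hva, hv1⟩ := hv
    have hθv : u ≤ θ * v := by nlinarith
    dsimp only
    rw [min_eq_left hθv, max_eq_left (by linarith)]
  rw [h1, h2, intervalIntegral.integral_const_mul, integral_id, intervalIntegral.integral_const]
  have hθ : θ ≠ 0 := hθ0.ne'
  field_simp [ha]
  rw [hua]; ring

lemma inner_ge (θ u : ℝ) (hθ0 : 0 < θ) (hθ1 : θ < 1) (huθ : θ ≤ u) (hu1 : u ≤ 1) :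
    ∫ v in (0:ℝ)..1, Ctheta θ u v
      = 1 / 2 - (1 - u) + (1 - u) ^ 2 / (2 * (1 - θ)) := by
  have h1θ : (0:ℝ) < 1 - θ := by linarith
  set b := (1 - u) / (1 - θ) with hb
  have hb0 : 0 ≤ b := div_nonneg (by linarith) h1θ.le
  have hb1 : b ≤ 1 := (div_le_one h1θ).2 (by linarith)
  have hub : 1 - u = (1 - θ) * b := by rw [hb]; field_simp
  rw [integral_congr (g := fun v => max (min u (θ * v)) (u + v - 1))
    (fun v hv => Ctheta_eq_F θ u
      (by rw [Set.uIcc_of_le (by norm_num : (0:ℝ) ≤ 1)] at hv; exact hv.2))]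
  rw [← integral_add_adjacent_intervals (b := b)
    ((contF θ u).intervalIntegrable _ _) ((contF θ u).intervalIntegrable _ _)]
  have h1 : ∫ v in (0:ℝ)..b, max (min u (θ * v)) (u + v - 1) = ∫ v in (0:ℝ)..b, θ * v := by
    apply integral_congr
    intro v hv
    rw [Set.uIcc_of_le hb0] at hv
    obtain ⟨hv0, hvb⟩ := hv
    have h3 : u + v - 1 ≤ θ * v := by nlinarith
    have hθv : θ * v ≤ u := by nlinarith
    dsimp only
    rw [min_eq_right hθv, max_eq_left h3]
  have h2 : ∫ v in b..1, max (min u (θ * v)) (u + v - 1)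
      = ∫ v in b..1, (v + (u - 1)) := by
    apply integral_congr
    intro v hv
    rw [Set.uIcc_of_le hb1] at hv
    obtain ⟨hvb, hv1⟩ := hv
    have h3 : θ * v ≤ u + v - 1 := by nlinarith
    dsimp only
    rw [max_eq_right (le_trans (min_le_right _ _) h3)]
    ring
  rw [h1, h2, intervalIntegral.integral_const_mul, integral_id,
    intervalIntegral.integral_add intervalIntegrable_id (intervalIntegrable_const),
    integral_id, intervalIntegral.integral_const]
  have : b ^ 2 = ((1-u)/(1-θ))^2 := by rw [hb]
  field_simp [hb]
  have hu' : u = 1 - (1 - θ) * b := by linarith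
  rw [hu']; ring

theorem Ctheta_spearman_rho (θ : ℝ) (hθ0 : 0 < θ) (hθ1 : θ < 1) :
    12 * (∫ u in (0:ℝ)..1, ∫ v in (0:ℝ)..1, Ctheta θ u v) - 3 = 2 * θ - 1 := by
  have h1θ : (0:ℝ) < 1 - θ := by linarith
  set g : ℝ → ℝ := fun u => ∫ v in (0:ℝ)..1, Ctheta θ u v with hg
  have hp : Continuous (fun u : ℝ => u - u ^ 2 / (2 * θ)) := by fun_prop
  have hq : Continuous (fun u : ℝ => 1 / 2 - (1 - u) + (1 - u) ^ 2 / (2 * (1 - θ))) := by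
    fun_prop
  have hint1 : IntervalIntegrable g volume 0 θ := by
    rw [intervalIntegrable_iff]
    apply ((hp.integrableOn_uIoc (a := 0) (b := θ)).congr_fun ?_ measurableSet_uIoc)
    intro u hu
    rw [Set.uIoc_of_le hθ0.le] at hu
    exact (inner_le θ u hθ0 hθ1 hu.1.le hu.2).symm
  have hint2 : IntervalIntegrable g volume θ 1 := by
    rw [intervalIntegrable_iff]
    apply ((hq.integrableOn_uIoc (a := θ) (b := 1)).congr_fun ?_ measurableSet_uIoc)
    intro u hu
    rw [Set.uIoc_of_le hθ1.le] at hu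
    exact (inner_ge θ u hθ0 hθ1 hu.1.le hu.2).symm
  rw [← integral_add_adjacent_intervals (b := θ) hint1 hint2]
  have e1 : ∫ u in (0:ℝ)..θ, g u = ∫ u in (0:ℝ)..θ, (u - u ^ 2 / (2 * θ)) := by
    apply integral_congr
    intro u hu
    rw [Set.uIcc_of_le hθ0.le] at hu
    exact inner_le θ u hθ0 hθ1 hu.1 hu.2
  have e2 : ∫ u in θ..1, g u
      = ∫ u in θ..1, (1 / 2 - (1 - u) + (1 - u) ^ 2 / (2 * (1 - θ))) := by
    apply integral_congr
    intro u hu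
    rw [Set.uIcc_of_le hθ1.le] at hu
    exact inner_ge θ u hθ0 hθ1 hu.1 hu.2
  rw [e1, e2]
  have I1 : ∫ u in (0:ℝ)..θ, (u - u ^ 2 / (2 * θ)) = θ ^ 2 / 3 := by
    rw [intervalIntegral.integral_sub intervalIntegrable_id
      (by apply Continuous.intervalIntegrable; fun_prop)]
    have : ∫ u in (0:ℝ)..θ, u ^ 2 / (2 * θ) = (1 / (2 * θ)) * ∫ u in (0:ℝ)..θ, u ^ 2 := by
      rw [← intervalIntegral.integral_const_mul]
      congr 1; ext u; ring
    rw [this, integral_id, integral_pow]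
    field_simp
    ring
  have I2 : ∫ u in θ..1, (1 / 2 - (1 - u) + (1 - u) ^ 2 / (2 * (1 - θ)))
      = (1 - θ) / 2 - (1 - θ) ^ 2 / 3 := by
    have key : ∀ u : ℝ, 1 / 2 - (1 - u) + (1 - u) ^ 2 / (2 * (1 - θ))
        = (1 / (2 * (1 - θ))) * u ^ 2 + (1 - 1 / (1 - θ)) * u
          + (-1 / 2 + 1 / (2 * (1 - θ))) := by
      intro u; field_simp; ring
    simp_rw [key]
    rw [intervalIntegral.integral_add (by apply Continuous.intervalIntegrable; fun_prop)
      intervalIntegrable_const,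
      intervalIntegral.integral_add (by apply Continuous.intervalIntegrable; fun_prop)
      (by apply Continuous.intervalIntegrable; fun_prop),
      intervalIntegral.integral_const_mul, intervalIntegral.integral_const_mul,
      integral_id, integral_pow, intervalIntegral.integral_const]
    simp only [smul_eq_mul]
    push_cast
    field_simp
    ring
  rw [I1, I2]
  ring
end

section
/- For 0 < θ < 1, the Schweizer–Wolff measure of the copula C_θ equals θ² + (θ−1)², where σ = 12·∫∫_{[0,1]²} |C_θ(u,v) − uv| du dv and C_θ(u,v) = u if u ≤ θv, θv if θv < u < 1−(1−θ)v, and u+v−1 if u ≥ 1−(1−θ)v. -/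
open MeasureTheory intervalIntegral Set

lemma integral_quadratic (p q r a b : ℝ) :
    ∫ x in a..b, (p + q * x + r * x ^ 2)
      = (p * b + q * b ^ 2 / 2 + r * b ^ 3 / 3) - (p * a + q * a ^ 2 / 2 + r * a ^ 3 / 3) := by
  have hd : ∀ x ∈ Set.uIcc a b,
      HasDerivAt (fun x => p * x + q * x ^ 2 / 2 + r * x ^ 3 / 3) (p + q * x + r * x ^ 2) x := by
    intro x _
    have h := (((hasDerivAt_id x).const_mul p).add
        (((hasDerivAt_pow 2 x).const_mul q).div_const 2)).add
        (((hasDerivAt_pow 3 x).const_mul r).div_const 3)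
    refine HasDerivAt.congr_deriv h ?_
    ring
  rw [intervalIntegral.integral_eq_sub_of_hasDerivAt hd
    (Continuous.intervalIntegrable (by continuity) a b)]

lemma split_integral (f g1 g2 : ℝ → ℝ) (c : ℝ)
    (hg1 : Continuous g1) (hg2 : Continuous g2)
    (e1 : Set.EqOn f g1 (Set.uIcc 0 c)) (e2 : Set.EqOn f g2 (Set.uIcc c 1)) :
    ∫ x in (0:ℝ)..1, f x = (∫ x in (0:ℝ)..c, g1 x) + ∫ x in c..1, g2 x := by
  have i1 : IntervalIntegrable f volume 0 c :=
    (hg1.intervalIntegrable 0 c).congr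
      (fun x hx => (e1 (Set.uIoc_subset_uIcc hx)).symm)
  have i2 : IntervalIntegrable f volume c 1 :=
    (hg2.intervalIntegrable c 1).congr
      (fun x hx => (e2 (Set.uIoc_subset_uIcc hx)).symm)
  rw [← intervalIntegral.integral_add_adjacent_intervals i1 i2,
    intervalIntegral.integral_congr e1, intervalIntegral.integral_congr e2]

lemma inner_left (θ u : ℝ) (hθ0 : 0 < θ) (hθ1 : θ < 1) (hu0 : 0 ≤ u) (huθ : u ≤ θ) :
    (∫ v in (0:ℝ)..1, |Ctheta θ u v - u * v|) = u * (θ - u) / (2 * θ) := by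
  set c := u / θ with hc
  have hc0 : 0 ≤ c := div_nonneg hu0 hθ0.le
  have hc1 : c ≤ 1 := (div_le_one hθ0).2 huθ
  have e1 : Set.EqOn (fun v => |Ctheta θ u v - u * v|) (fun v => 0 + (θ - u) * v + 0 * v ^ 2)
      (Set.uIcc 0 c) := by
    intro v hv
    rw [Set.uIcc_of_le hc0] at hv
    obtain ⟨hv0, hvc⟩ := hv
    have hv1 : v ≤ 1 := hvc.trans hc1
    have hvθ : v * θ ≤ u := (le_div_iff₀ hθ0).1 hvc
    simp only [Ctheta]
    split_ifs with h1 h2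
    · have hu : u = θ * v := le_antisymm h1 (by linarith)
      rw [abs_of_nonneg (by nlinarith)]
      linear_combination hu
    · rw [abs_of_nonneg (by nlinarith)]; ring
    · push_neg at h1 h2
      exfalso
      nlinarith [mul_lt_mul_of_pos_left h1 (show (0:ℝ) < 1 - θ by linarith)]
  have e2 : Set.EqOn (fun v => |Ctheta θ u v - u * v|) (fun v => u + (-u) * v + 0 * v ^ 2)
      (Set.uIcc c 1) := by
    intro v hv
    rw [Set.uIcc_of_le hc1] at hv
    obtain ⟨hvc, hv1⟩ := hv
    have hvθ : u ≤ θ * v := by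
      have := (div_le_iff₀ hθ0).1 hvc; linarith
    simp only [Ctheta, if_pos hvθ]
    rw [abs_of_nonneg (by nlinarith)]; ring
  rw [split_integral _ _ _ c (by continuity) (by continuity) e1 e2,
    integral_quadratic, integral_quadratic, hc]
  field_simp
  ring

lemma inner_right (θ u : ℝ) (hθ0 : 0 < θ) (hθ1 : θ < 1) (hθu : θ ≤ u) (hu1 : u ≤ 1) :
    (∫ v in (0:ℝ)..1, |Ctheta θ u v - u * v|) = (1 - u) * (u - θ) / (2 * (1 - θ)) := by
  have hθ1' : (0:ℝ) < 1 - θ := by linarith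
  set a := (1 - u) / (1 - θ) with ha
  have ha0 : 0 ≤ a := div_nonneg (by linarith) hθ1'.le
  have ha1 : a ≤ 1 := (div_le_one hθ1').2 (by linarith)
  have e1 : Set.EqOn (fun v => |Ctheta θ u v - u * v|) (fun v => 0 + (u - θ) * v + 0 * v ^ 2)
      (Set.uIcc 0 a) := by
    intro v hv
    rw [Set.uIcc_of_le ha0] at hv
    obtain ⟨hv0, hva⟩ := hv
    have hv1 : v ≤ 1 := hva.trans ha1
    have hvθ : v * (1 - θ) ≤ 1 - u := (le_div_iff₀ hθ1').1 hva
    simp only [Ctheta]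
    split_ifs with h1 h2
    · have hu : u = θ := le_antisymm (by nlinarith) hθu
      have hv : v = 1 := by nlinarith
      rw [hu, hv]; simp
    · rw [abs_of_nonpos (by nlinarith)]; ring
    · push_neg at h1 h2
      have huv : u + v - 1 = θ * v := by nlinarith
      rw [huv, abs_of_nonpos (by nlinarith)]; ring
  have e2 : Set.EqOn (fun v => |Ctheta θ u v - u * v|)
      (fun v => (1 - u) + (-(1 - u)) * v + 0 * v ^ 2) (Set.uIcc a 1) := by
    intro v hv
    rw [Set.uIcc_of_le ha1] at hv
    obtain ⟨hva, hv1⟩ := hv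
    have hvθ : 1 - u ≤ v * (1 - θ) := by
      have := (div_le_iff₀ hθ1').1 hva; linarith
    simp only [Ctheta]
    split_ifs with h1 h2
    · have hv : v = 1 := by nlinarith
      rw [hv]; simp
    · exfalso; nlinarith
    · rw [abs_of_nonpos (by nlinarith)]; ring
  rw [split_integral _ _ _ a (by continuity) (by continuity) e1 e2,
    integral_quadratic, integral_quadratic, ha]
  field_simp
  ring

theorem Ctheta_schweizer_wolff (θ : ℝ) (hθ0 : 0 < θ) (hθ1 : θ < 1) :
    12 * (∫ u in (0:ℝ)..1, ∫ v in (0:ℝ)..1, |Ctheta θ u v - u * v|) = θ ^ 2 + (θ - 1) ^ 2 := by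
  have hθ1' : (0:ℝ) < 1 - θ := by linarith
  have e1 : Set.EqOn (fun u => ∫ v in (0:ℝ)..1, |Ctheta θ u v - u * v|)
      (fun u => 0 + (1 / 2) * u + (-(1 / (2 * θ))) * u ^ 2) (Set.uIcc 0 θ) := by
    intro u hu
    rw [Set.uIcc_of_le hθ0.le] at hu
    dsimp only
    rw [inner_left θ u hθ0 hθ1 hu.1 hu.2]
    field_simp
    ring
  have e2 : Set.EqOn (fun u => ∫ v in (0:ℝ)..1, |Ctheta θ u v - u * v|)
      (fun u => (-(θ / (2 * (1 - θ)))) + ((1 + θ) / (2 * (1 - θ))) * u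
        + (-(1 / (2 * (1 - θ)))) * u ^ 2) (Set.uIcc θ 1) := by
    intro u hu
    rw [Set.uIcc_of_le hθ1.le] at hu
    dsimp only
    rw [inner_right θ u hθ0 hθ1 hu.1 hu.2]
    field_simp
    ring
  rw [split_integral _ _ _ θ (by continuity) (by continuity) e1 e2,
    integral_quadratic, integral_quadratic]
  field_simp
  ring
end
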